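/- Let E be a nonnegative random variable with E[E] ≤ 1, E^a a nonnegative random variable, U ~ Uniform(0,1) independent of (E^a, E), h : [0,∞) → (0,1), and β ∈ [0,1]. For the optimal active e-value E^active = (β/(1−h(E^a)))·1{U ≥ h(E^a)} + ((1−β)/h(E^a))·E·1{U < h(E^a)}, the conditional expectation satisfies E[E^active | E^a, E] = β + (1−β)·E, and hence E[E^active] = β + (1−β)E[E] ≤ 1. -/

import Mathlib

open MeasureTheory Set ProbabilityTheory

/-- Tightness of the optimal active e-value: its conditional expectation given `(E^a, E)` is
`β + (1-β)E`, hence its expectation equals `β + (1-β)𝔼[E] ≤ 1`. -/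
theorem active_evalue_conditional_expectation
    {Ω : Type*} [MeasurableSpace Ω] (μ : Measure Ω) [IsProbabilityMeasure μ]
    (E Ea U : Ω → ℝ) (hEm : Measurable E) (hEam : Measurable Ea) (hUm : Measurable U)
    (hEnn : ∀ ω, 0 ≤ E ω) (hEann : ∀ ω, 0 ≤ Ea ω)
    (hEint : Integrable E μ) (hE1 : ∫ ω, E ω ∂μ ≤ 1)
    (hUnif : μ.map U = volume.restrict (Icc (0:ℝ) 1))
    (hIndep : IndepFun U (fun ω => (Ea ω, E ω)) μ)
    (h : ℝ → ℝ) (hhm : Measurable h) (hh : ∀ x, h x ∈ Ioo (0:ℝ) 1)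
    (β : ℝ) (hβ : β ∈ Icc (0:ℝ) 1) :
    (μ[(fun ω => if U ω < h (Ea ω) then ((1 - β) / h (Ea ω)) * E ω
            else β / (1 - h (Ea ω)))
        | MeasurableSpace.comap (fun ω => (Ea ω, E ω)) inferInstance]
      =ᵐ[μ] fun ω => β + (1 - β) * E ω) ∧
    (∫ ω, (if U ω < h (Ea ω) then ((1 - β) / h (Ea ω)) * E ω else β / (1 - h (Ea ω))) ∂μ
        = β + (1 - β) * ∫ ω, E ω ∂μ) ∧
    (∫ ω, (if U ω < h (Ea ω) then ((1 - β) / h (Ea ω)) * E ω else β / (1 - h (Ea ω))) ∂μ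
        ≤ 1) := by
  -- notation
  set Y : Ω → ℝ × ℝ := fun ω => (Ea ω, E ω) with hYdef
  have hYm : Measurable Y := hEam.prodMk hEm
  set X : Ω → ℝ := fun ω => if U ω < h (Ea ω) then ((1 - β) / h (Ea ω)) * E ω
      else β / (1 - h (Ea ω)) with hXdef
  set g : Ω → ℝ := fun ω => β + (1 - β) * E ω with hgdef
  have hm : MeasurableSpace.comap Y inferInstance ≤ (inferInstance : MeasurableSpace Ω) :=
    hYm.comap_le
  -- basic facts
  have hXm : Measurable X := by
    apply Measurable.ite
    · exact measurableSet_lt hUm (hhm.comp hEam)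
    · exact ((measurable_const.div (hhm.comp hEam)).mul hEm)
    · exact measurable_const.div (measurable_const.sub (hhm.comp hEam))
  have hXnn : ∀ ω, 0 ≤ X ω := by
    intro ω
    simp only [hXdef]
    split
    · exact mul_nonneg (div_nonneg (by linarith [hβ.2]) (hh (Ea ω)).1.le) (hEnn ω)
    · exact div_nonneg hβ.1 (by linarith [(hh (Ea ω)).2])
  have hgnn : ∀ ω, 0 ≤ g ω := fun ω =>
    add_nonneg hβ.1 (mul_nonneg (by linarith [hβ.2]) (hEnn ω))
  have hgint : Integrable g μ := (integrable_const β).add (hEint.const_mul _)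
  -- the joint law of (U, Y)
  have hmap : μ.map (fun ω => (U ω, Y ω))
      = (volume.restrict (Icc (0:ℝ) 1)).prod (μ.map Y) := by
    rw [← hUnif]
    exact (indepFun_iff_map_prod_eq_prod_map_map hUm.aemeasurable hYm.aemeasurable).mp hIndep
  -- the ENNReal-valued version of X as a function of (u, y)
  set φ : ℝ × (ℝ × ℝ) → ENNReal := fun q => ENNReal.ofReal
      (if q.1 < h q.2.1 then ((1 - β) / h q.2.1) * q.2.2 else β / (1 - h q.2.1)) with hφdef
  have hφm : Measurable φ := by
    apply Measurable.ennreal_ofReal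
    apply Measurable.ite
    · exact measurableSet_lt measurable_fst (hhm.comp (measurable_fst.comp measurable_snd))
    · exact (measurable_const.div (hhm.comp (measurable_fst.comp measurable_snd))).mul
        (measurable_snd.comp measurable_snd)
    · exact measurable_const.div (measurable_const.sub
        (hhm.comp (measurable_fst.comp measurable_snd)))
  have hψm : Measurable (fun y : ℝ × ℝ => ENNReal.ofReal (β + (1 - β) * y.2)) :=
    (measurable_const.add (measurable_snd.const_mul _)).ennreal_ofReal
  -- a.e. nonnegativity of the second coordinate under the law of Y
  have hae2 : ∀ᵐ y ∂(μ.map Y), 0 ≤ y.2 := by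
    rw [ae_map_iff hYm.aemeasurable (measurableSet_le measurable_const measurable_snd)]
    exact Filter.Eventually.of_forall fun ω => hEnn ω
  -- the inner integral computation
  have hinner : ∀ y : ℝ × ℝ, 0 ≤ y.2 →
      ∫⁻ u, φ (u, y) ∂(volume.restrict (Icc (0:ℝ) 1))
        = ENNReal.ofReal (β + (1 - β) * y.2) := by
    intro y hy2
    obtain ⟨ha0, ha1⟩ := hh y.1
    set a := h y.1
    set c₁ : ℝ := ((1 - β) / a) * y.2
    set c₂ : ℝ := β / (1 - a)
    have hc₁ : 0 ≤ c₁ := mul_nonneg (div_nonneg (by linarith [hβ.2]) ha0.le) hy2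
    have hc₂ : 0 ≤ c₂ := div_nonneg hβ.1 (by linarith)
    have hfun : (fun u : ℝ => φ (u, y)) = fun u =>
        (Iio a).indicator (fun _ => ENNReal.ofReal c₁) u
          + (Ici a).indicator (fun _ => ENNReal.ofReal c₂) u := by
      funext u
      by_cases hu : u < a
      · have hu' : u < h y.1 := hu
        simp [hφdef, hu', indicator, not_le.mpr hu', a, c₁]
      · have hu' : ¬u < h y.1 := hu
        simp [hφdef, hu', indicator, not_lt.mp hu', a, c₂]
    rw [hfun, lintegral_add_left ((measurable_const).indicator measurableSet_Iio),
      lintegral_indicator measurableSet_Iio, lintegral_indicator measurableSet_Ici,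
      setLIntegral_const, setLIntegral_const,
      Measure.restrict_apply measurableSet_Iio, Measure.restrict_apply measurableSet_Ici]
    have h1 : Iio a ∩ Icc (0:ℝ) 1 = Ico 0 a := by
      ext u
      simp only [mem_inter_iff, mem_Iio, mem_Icc, mem_Ico]
      exact ⟨fun ⟨h1, h2, _⟩ => ⟨h2, h1⟩, fun ⟨h1, h2⟩ => ⟨h2, h1, by linarith⟩⟩
    have h2 : Ici a ∩ Icc (0:ℝ) 1 = Icc a 1 := by
      ext u
      simp only [mem_inter_iff, mem_Ici, mem_Icc]
      exact ⟨fun ⟨h1, _, h3⟩ => ⟨h1, h3⟩, fun ⟨h1, h2⟩ => ⟨h1, by linarith, h2⟩⟩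
    have ha0' : a ≠ 0 := ne_of_gt ha0
    have ha1' : (1 : ℝ) - a ≠ 0 := by intro hc; linarith
    rw [h1, h2, Real.volume_Ico, Real.volume_Icc, ← ENNReal.ofReal_mul hc₁,
      ← ENNReal.ofReal_mul hc₂,
      ← ENNReal.ofReal_add (mul_nonneg hc₁ (by linarith)) (mul_nonneg hc₂ (by linarith))]
    congr 1
    have e1 : c₁ * (a - 0) = (1 - β) * y.2 := by
      show ((1 - β) / a) * y.2 * (a - 0) = (1 - β) * y.2
      rw [sub_zero]
      field_simp
    have e2 : c₂ * (1 - a) = β := div_mul_cancel₀ β ha1'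
    rw [e1, e2]
    ring
  -- key set-lintegral identity
  have hkey : ∀ t : Set (ℝ × ℝ), MeasurableSet t →
      ∫⁻ ω in Y ⁻¹' t, ENNReal.ofReal (X ω) ∂μ
        = ∫⁻ ω in Y ⁻¹' t, ENNReal.ofReal (g ω) ∂μ := by
    intro t ht
    have hXcomp : ∀ ω, ENNReal.ofReal (X ω) = φ (U ω, Y ω) := fun ω => rfl
    calc ∫⁻ ω in Y ⁻¹' t, ENNReal.ofReal (X ω) ∂μ
        = ∫⁻ ω in (fun ω => (U ω, Y ω)) ⁻¹' (Prod.snd ⁻¹' t), φ (U ω, Y ω) ∂μ := by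
          rfl
      _ = ∫⁻ q in Prod.snd ⁻¹' t, φ q ∂(μ.map (fun ω => (U ω, Y ω))) :=
          (setLIntegral_map (measurable_snd ht) hφm (hUm.prodMk hYm)).symm
      _ = ∫⁻ q, φ q ∂((volume.restrict (Icc (0:ℝ) 1)).prod ((μ.map Y).restrict t)) := by
          rw [hmap]
          have hpre : Prod.snd ⁻¹' t = (univ : Set ℝ) ×ˢ t := by ext q; simp
          rw [hpre, ← Measure.prod_restrict, Measure.restrict_univ]
      _ = ∫⁻ y, ∫⁻ u, φ (u, y) ∂(volume.restrict (Icc (0:ℝ) 1)) ∂((μ.map Y).restrict t) :=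
          lintegral_prod_symm φ hφm.aemeasurable
      _ = ∫⁻ y in t, ENNReal.ofReal (β + (1 - β) * y.2) ∂(μ.map Y) := by
          refine lintegral_congr_ae ?_
          filter_upwards [ae_restrict_of_ae hae2] with y hy using hinner y hy
      _ = ∫⁻ ω in Y ⁻¹' t, ENNReal.ofReal (g ω) ∂μ :=
          setLIntegral_map ht hψm hYm
  -- integrability of X
  have hglint : ∫⁻ ω, ENNReal.ofReal (g ω) ∂μ < ⊤ := by
    have := hgint.hasFiniteIntegral
    rwa [hasFiniteIntegral_iff_ofReal (Filter.Eventually.of_forall hgnn)] at this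
  have hXint : Integrable X μ := by
    refine ⟨hXm.aestronglyMeasurable, ?_⟩
    rw [hasFiniteIntegral_iff_ofReal (Filter.Eventually.of_forall hXnn)]
    have hk := hkey univ MeasurableSet.univ
    rw [Set.preimage_univ, Measure.restrict_univ] at hk
    rw [hk]
    exact hglint
  -- set-integral identity in ℝ
  have hset : ∀ t : Set (ℝ × ℝ), MeasurableSet t →
      ∫ ω in Y ⁻¹' t, g ω ∂μ = ∫ ω in Y ⁻¹' t, X ω ∂μ := by
    intro t ht
    rw [integral_eq_lintegral_of_nonneg_ae (Filter.Eventually.of_forall hgnn)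
        (hgint.aestronglyMeasurable.restrict),
      integral_eq_lintegral_of_nonneg_ae (Filter.Eventually.of_forall hXnn)
        (hXm.aestronglyMeasurable.restrict),
      hkey t ht]
  -- m-measurability of g
  have hYm' : @Measurable Ω (ℝ × ℝ) (MeasurableSpace.comap Y inferInstance) _ Y :=
    fun t ht => ⟨t, ht, rfl⟩
  have hgm' : @Measurable Ω ℝ (MeasurableSpace.comap Y inferInstance) _ g :=
    (measurable_const.add (measurable_snd.const_mul _)).comp hYm'
  -- the conditional expectation identity
  have h1 : g =ᵐ[μ] μ[X | MeasurableSpace.comap Y inferInstance] := by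
    refine ae_eq_condExp_of_forall_setIntegral_eq hm hXint ?_ ?_ ?_
    · exact fun s _ _ => hgint.integrableOn
    · rintro s ⟨t, ht, rfl⟩ _
      exact hset t ht
    · exact (hgm'.stronglyMeasurable).aestronglyMeasurable
  have hint : ∫ ω, X ω ∂μ = β + (1 - β) * ∫ ω, E ω ∂μ := by
    have h2 : ∫ ω, X ω ∂μ = ∫ ω, g ω ∂μ := by
      calc ∫ ω, X ω ∂μ
          = ∫ ω, (μ[X | MeasurableSpace.comap Y inferInstance]) ω ∂μ :=
            (integral_condExp hm).symm
        _ = ∫ ω, g ω ∂μ := (integral_congr_ae h1).symm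
    rw [h2, hgdef]
    rw [integral_add (integrable_const β) (hEint.const_mul _), integral_const,
      MeasureTheory.integral_const_mul]
    simp
  refine ⟨h1.symm, hint, ?_⟩
  rw [hint]
  have hEnn' : 0 ≤ ∫ ω, E ω ∂μ := integral_nonneg hEnn
  nlinarith [hβ.1, hβ.2]
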